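/- Assume the weight matrix ω is symmetric with ω_ii = 0 for all i, and let x : [0,∞) → ℝ^N be a solution of the autonomous Hopfield network. Then every limit point of the trajectory is an equilibrium: if t_n → ∞ and x(t_n) → p in ℝ^N, then u(p) = 0. Equivalently, the solution's velocity tends to zero, so the trajectory converges to the set of fixed points and no sustained oscillations are possible. -/

import Mathlib

open Real Filter

noncomputable def F (lam s : ℝ) : ℝ := (2 / Real.pi) * Real.arctan (lam * Real.pi * s / 2)

noncomputable def u (N : ℕ) (lam g : ℝ) (ω : Fin N → Fin N → ℝ) (x : Fin N → ℝ) (i : Fin N) : ℝ :=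
  -x i + g * ∑ j, F lam (ω i j) * F lam (x j)

noncomputable def Fd (lam s : ℝ) : ℝ := lam / (1 + (lam * Real.pi * s / 2) ^ 2)

noncomputable def G (lam a : ℝ) : ℝ := (2 / (lam * Real.pi ^ 2)) * Real.log (1 + (lam * Real.pi * a / 2) ^ 2)

lemma abs_F_le (lam s : ℝ) : |F lam s| ≤ 1 := by
  have h1 : |Real.arctan (lam * Real.pi * s / 2)| ≤ Real.pi / 2 :=
    le_of_lt (abs_lt.mpr ⟨Real.neg_pi_div_two_lt_arctan _, Real.arctan_lt_pi_div_two _⟩)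
  have hpi := Real.pi_pos
  rw [F, abs_mul, abs_of_pos (by positivity : (0:ℝ) < 2 / Real.pi)]
  calc 2 / Real.pi * |Real.arctan (lam * Real.pi * s / 2)| ≤ 2 / Real.pi * (Real.pi / 2) := by
        exact mul_le_mul_of_nonneg_left h1 (by positivity)
    _ = 1 := by field_simp
  
lemma Fd_pos (lam : ℝ) (hlam : 0 < lam) (s : ℝ) : 0 < Fd lam s := by
  rw [Fd]; positivity

lemma hasDerivAt_F (lam s : ℝ) : HasDerivAt (F lam) (Fd lam s) s := by
  have hpi := Real.pi_pos
  have h1 : HasDerivAt (fun s : ℝ => lam * Real.pi * s / 2) (lam * Real.pi / 2) s := by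
    simpa using ((hasDerivAt_id s).const_mul (lam * Real.pi)).div_const 2
  have h2 := (Real.hasDerivAt_arctan (lam * Real.pi * s / 2)).comp s h1
  have h3 := h2.const_mul (2 / Real.pi)
  refine h3.congr_deriv ?_
  rw [Fd]
  have hne : (1 + (lam * Real.pi * s / 2) ^ 2) ≠ 0 := by positivity
  field_simp

lemma hasDerivAt_G (lam : ℝ) (hlam : 0 < lam) (a : ℝ) :
    HasDerivAt (G lam) (a * Fd lam a) a := by
  have hpi := Real.pi_pos
  have hq : (0:ℝ) < 1 + (lam * Real.pi * a / 2) ^ 2 := by positivity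
  have h1 : HasDerivAt (fun a : ℝ => 1 + (lam * Real.pi * a / 2) ^ 2)
      (2 * (lam * Real.pi * a / 2) * (lam * Real.pi / 2)) a := by
    have hin : HasDerivAt (fun a : ℝ => lam * Real.pi * a / 2) (lam * Real.pi / 2) a := by
      simpa using ((hasDerivAt_id a).const_mul (lam * Real.pi)).div_const 2
    simpa [mul_comm] using ((hin.pow 2).const_add 1)
  have h2 := ((Real.hasDerivAt_log hq.ne').comp a h1).const_mul (2 / (lam * Real.pi ^ 2))
  refine h2.congr_deriv ?_
  rw [Fd]
  field_simp

lemma G_nonneg (lam a : ℝ) (hlam : 0 < lam) : 0 ≤ G lam a := by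
  have hpi := Real.pi_pos
  have : (0:ℝ) ≤ Real.log (1 + (lam * Real.pi * a / 2) ^ 2) :=
    Real.log_nonneg (by nlinarith [sq_nonneg (lam * Real.pi * a / 2)])
  rw [G]; positivity

lemma antitoneOn_of_hasDerivAt_nonpos {f d : ℝ → ℝ} {s : Set ℝ} (hs : Convex ℝ s)
    (h : ∀ t ∈ s, HasDerivAt f (d t) t) (hd : ∀ t ∈ interior s, d t ≤ 0) :
    AntitoneOn f s :=
  antitoneOn_of_deriv_nonpos hs (fun t ht => (h t ht).continuousAt.continuousWithinAt)
    (fun t ht => ((h t (interior_subset ht)).differentiableAt).differentiableWithinAt)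
    (fun t ht => ((h t (interior_subset ht)).deriv) ▸ hd t ht)

lemma monotoneOn_of_hasDerivAt_nonneg {f d : ℝ → ℝ} {s : Set ℝ} (hs : Convex ℝ s)
    (h : ∀ t ∈ s, HasDerivAt f (d t) t) (hd : ∀ t ∈ interior s, 0 ≤ d t) :
    MonotoneOn f s :=
  monotoneOn_of_deriv_nonneg hs (fun t ht => (h t ht).continuousAt.continuousWithinAt)
    (fun t ht => ((h t (interior_subset ht)).differentiableAt).differentiableWithinAt)
    (fun t ht => ((h t (interior_subset ht)).deriv) ▸ hd t ht)

lemma alg_identity (n : ℕ) (g : ℝ) (A : Fin n → Fin n → ℝ) (hA : ∀ i j, A i j = A j i)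
    (xv d uu b : Fin n → ℝ) (hb : ∀ i, g * ∑ j, A i j * b j = uu i + xv i) :
    (∑ i, xv i * d i * uu i)
      - g / 2 * ∑ i, ∑ j, A i j * ((d i * uu i) * b j + b i * (d j * uu j))
      = -∑ i, d i * uu i ^ 2 := by
  have hswap : ∑ i, ∑ j, A i j * (b i * (d j * uu j))
      = ∑ i, ∑ j, A i j * ((d i * uu i) * b j) := by
    rw [Finset.sum_comm]
    refine Finset.sum_congr rfl fun i _ => Finset.sum_congr rfl fun j _ => ?_
    rw [hA]; ring
  have expand : ∑ i, ∑ j, A i j * ((d i * uu i) * b j + b i * (d j * uu j))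
      = 2 * ∑ i, (d i * uu i) * ∑ j, A i j * b j := by
    simp only [mul_add, Finset.sum_add_distrib, hswap, Finset.mul_sum]
    rw [← Finset.sum_add_distrib]
    refine Finset.sum_congr rfl fun i _ => ?_
    rw [← Finset.sum_add_distrib]
    exact Finset.sum_congr rfl fun j _ => by ring
  rw [expand]
  have hkey : g / 2 * (2 * ∑ i, (d i * uu i) * ∑ j, A i j * b j)
      = ∑ i, (d i * uu i) * (uu i + xv i) := by
    rw [show g / 2 * (2 * ∑ i, (d i * uu i) * ∑ j, A i j * b j)
        = ∑ i, g * ((d i * uu i) * ∑ j, A i j * b j) by rw [← Finset.mul_sum]; ring]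
    exact Finset.sum_congr rfl fun i _ => by rw [show g * ((d i * uu i) * ∑ j, A i j * b j) = (d i * uu i) * (g * ∑ j, A i j * b j) by ring, hb i]
  rw [hkey, ← Finset.sum_sub_distrib, ← Finset.sum_neg_distrib]
  exact Finset.sum_congr rfl fun i _ => by ring
noncomputable def Phi (N : ℕ) (lam g : ℝ) (ω : Fin N → Fin N → ℝ) (y : Fin N → ℝ) : ℝ :=
  ∑ i, Fd lam (y i) * (u N lam g ω y i) ^ 2

lemma Phi_nonneg (N : ℕ) (lam g : ℝ) (hlam : 0 < lam) (ω : Fin N → Fin N → ℝ)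
    (y : Fin N → ℝ) : 0 ≤ Phi N lam g ω y :=
  Finset.sum_nonneg fun i _ => mul_nonneg (Fd_pos lam hlam (y i)).le (sq_nonneg _)

lemma continuous_Phi (N : ℕ) (lam g : ℝ) (ω : Fin N → Fin N → ℝ) :
    Continuous (Phi N lam g ω) := by
  have hFc : Continuous (F lam) := by
    unfold F
    exact continuous_const.mul (Real.continuous_arctan.comp (by continuity))
  have hFd : Continuous (Fd lam) := by
    unfold Fd
    exact continuous_const.div (by continuity) (fun s => by positivity)
  have hu : ∀ i, Continuous fun y => u N lam g ω y i := fun i => by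
    unfold u
    exact ((continuous_apply i).neg).add
      (continuous_const.mul (continuous_finset_sum _ fun j _ =>
        continuous_const.mul (hFc.comp (continuous_apply j))))
  unfold Phi
  exact continuous_finset_sum _ fun i _ =>
    (hFd.comp (continuous_apply i)).mul ((hu i).pow 2)

lemma sum_F_bound (N : ℕ) (lam : ℝ) (ω : Fin N → Fin N → ℝ) (y : Fin N → ℝ) (i : Fin N) :
    |∑ j, F lam (ω i j) * F lam (y j)| ≤ (N : ℝ) := by
  calc |∑ j, F lam (ω i j) * F lam (y j)| ≤ ∑ j, |F lam (ω i j) * F lam (y j)| :=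
        Finset.abs_sum_le_sum_abs _ _
    _ ≤ ∑ _j : Fin N, (1 : ℝ) := Finset.sum_le_sum fun j _ => by
        rw [abs_mul]
        have h1 := abs_F_le lam (ω i j); have h2 := abs_F_le lam (y j)
        nlinarith [abs_nonneg (F lam (ω i j)), abs_nonneg (F lam (y j))]
    _ = (N : ℝ) := by simp
set_option maxHeartbeats 2000000 in
/-- For symmetric ω with zero diagonal, every limit point of a trajectory
of the autonomous Hopfield network is an equilibrium: if t_n → ∞ and x(t_n) → p,
then u(p) = 0. -/
theorem hopfield_limit_points_are_equilibria (N : ℕ) (hN : 2 ≤ N) (lam g : ℝ)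
    (hlam : 0 < lam) (hg : 0 < g) (ω : Fin N → Fin N → ℝ)
    (hsym : ∀ i j, ω i j = ω j i) (hdiag : ∀ i, ω i i = 0)
    (x : ℝ → Fin N → ℝ)
    (hsol : ∀ t ≥ (0 : ℝ), ∀ i, HasDerivAt (fun s => x s i) (u N lam g ω (x t) i) t) :
    ∀ (tn : ℕ → ℝ) (p : Fin N → ℝ),
      (∀ n, 0 ≤ tn n) → Tendsto tn atTop atTop →
      Tendsto (fun n => x (tn n)) atTop (nhds p) →
      ∀ i, u N lam g ω p i = 0 := by
  intro tn p htn0 htninf hconv i0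
  by_contra hne
  have hNpos : (0:ℝ) < N := by exact_mod_cast (by omega : 0 < N)
  -- constants
  set K : ℝ := g * N with hK
  have hKpos : 0 < K := mul_pos hg hNpos
  set B : ℝ := ‖x 0‖ + K with hB
  have hB0 : 0 ≤ ‖x 0‖ := norm_nonneg _
  set S : ℝ := B + K with hS
  have hSpos : 0 < S := by positivity
  -- global bound on trajectory
  have hxbound : ∀ t ≥ (0:ℝ), ∀ i, |x t i| ≤ B := by
    intro t ht i
    have hxi0 : |x 0 i| ≤ ‖x 0‖ := by
      simpa [Real.norm_eq_abs] using norm_le_pi_norm (x 0) i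
    have hderiv : ∀ s ∈ Set.Ici (0:ℝ),
        HasDerivAt (fun s => Real.exp s * x s i)
          (Real.exp s * x s i + Real.exp s * u N lam g ω (x s) i) s :=
      fun s hs => by exact (Real.hasDerivAt_exp s).mul (hsol s hs i)
    have hsum : ∀ s : ℝ, x s i + u N lam g ω (x s) i = g * ∑ j, F lam (ω i j) * F lam (x s j) := by
      intro s; simp only [u]; ring
    have hgsum : ∀ s : ℝ, g * ∑ j, F lam (ω i j) * F lam (x s j) ≤ K := by
      intro s
      have h2 := sum_F_bound N lam ω (x s) i
      have := le_trans (le_abs_self _) h2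
      calc g * ∑ j, F lam (ω i j) * F lam (x s j) ≤ g * N :=
            mul_le_mul_of_nonneg_left this hg.le
        _ = K := rfl
    have hgsum' : ∀ s : ℝ, -K ≤ g * ∑ j, F lam (ω i j) * F lam (x s j) := by
      intro s
      have h2 := sum_F_bound N lam ω (x s) i
      have := neg_le_of_abs_le h2
      have h3 : g * (-(N:ℝ)) ≤ g * ∑ j, F lam (ω i j) * F lam (x s j) :=
        mul_le_mul_of_nonneg_left this hg.le
      calc -K = g * (-(N:ℝ)) := by rw [hK]; ring
        _ ≤ _ := h3
    have hupper : AntitoneOn (fun s => Real.exp s * x s i - K * Real.exp s) (Set.Ici 0) := by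
      refine antitoneOn_of_hasDerivAt_nonpos (convex_Ici 0)
        (d := fun s => (Real.exp s * x s i + Real.exp s * u N lam g ω (x s) i) - K * Real.exp s)
        (fun s hs => (hderiv s hs).sub (by simpa using (Real.hasDerivAt_exp s).const_mul K)) ?_
      intro s hs
      have he := Real.exp_pos s
      have h1 : Real.exp s * x s i + Real.exp s * u N lam g ω (x s) i
          = Real.exp s * (g * ∑ j, F lam (ω i j) * F lam (x s j)) := by
        rw [← hsum s]; ring
      rw [h1]
      nlinarith [hgsum s]
    have hlower : MonotoneOn (fun s => Real.exp s * x s i + K * Real.exp s) (Set.Ici 0) := by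
      refine monotoneOn_of_hasDerivAt_nonneg (convex_Ici 0)
        (d := fun s => (Real.exp s * x s i + Real.exp s * u N lam g ω (x s) i) + K * Real.exp s)
        (fun s hs => (hderiv s hs).add (by simpa using (Real.hasDerivAt_exp s).const_mul K)) ?_
      intro s hs
      have he := Real.exp_pos s
      have h1 : Real.exp s * x s i + Real.exp s * u N lam g ω (x s) i
          = Real.exp s * (g * ∑ j, F lam (ω i j) * F lam (x s j)) := by
        rw [← hsum s]; ring
      rw [h1]
      nlinarith [hgsum' s]
    have hu1 := hupper (Set.self_mem_Ici) (Set.mem_Ici.mpr ht) ht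
    have hl1 := hlower (Set.self_mem_Ici) (Set.mem_Ici.mpr ht) ht
    simp only [Real.exp_zero, one_mul, mul_one] at hu1 hl1
    have he1 : 1 ≤ Real.exp t := Real.one_le_exp ht
    have hx0le : x 0 i ≤ ‖x 0‖ := le_trans (le_abs_self _) hxi0
    have hx0ge : -‖x 0‖ ≤ x 0 i := neg_le_of_abs_le hxi0
    have h6 : 0 ≤ (Real.exp t - 1) * ‖x 0‖ := mul_nonneg (by linarith) hB0
    rw [abs_le, hB, hK]
    rw [hK] at hu1 hl1
    constructor
    · nlinarith [Real.exp_pos t, mul_pos hg hNpos]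
    · nlinarith [Real.exp_pos t, mul_pos hg hNpos]
  -- speed bound
  have huS : ∀ t ≥ (0:ℝ), ∀ i, |u N lam g ω (x t) i| ≤ S := by
    intro t ht i
    have h1 := hxbound t ht i
    have h2 := sum_F_bound N lam ω (x t) i
    have : |u N lam g ω (x t) i| ≤ |x t i| + g * |∑ j, F lam (ω i j) * F lam (x t j)| := by
      simp only [u]
      calc |(-x t i) + g * ∑ j, F lam (ω i j) * F lam (x t j)|
          ≤ |(-x t i)| + |g * ∑ j, F lam (ω i j) * F lam (x t j)| := abs_add_le _ _
        _ = |x t i| + g * |∑ j, F lam (ω i j) * F lam (x t j)| := by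
            rw [abs_neg, abs_mul, abs_of_pos hg]
    calc |u N lam g ω (x t) i| ≤ |x t i| + g * |∑ j, F lam (ω i j) * F lam (x t j)| := this
      _ ≤ B + g * N := add_le_add h1 (mul_le_mul_of_nonneg_left h2 hg.le)
      _ = S := rfl
  -- time-Lipschitz bound
  have hLip : ∀ i, ∀ a b : ℝ, 0 ≤ a → a ≤ b → |x b i - x a i| ≤ S * (b - a) := by
    intro i a b ha hab
    have hb : (0:ℝ) ≤ b := le_trans ha hab
    have hup : AntitoneOn (fun s => x s i - S * s) (Set.Ici 0) := by
      refine antitoneOn_of_hasDerivAt_nonpos (convex_Ici 0)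
        (d := fun s => u N lam g ω (x s) i - S)
        (fun s hs => (hsol s hs i).sub (by simpa using (hasDerivAt_id s).const_mul S)) ?_
      intro s hs
      have := huS s (le_of_lt (by simpa using hs)) i
      have := le_of_abs_le this
      linarith
    have hlo : MonotoneOn (fun s => x s i + S * s) (Set.Ici 0) := by
      refine monotoneOn_of_hasDerivAt_nonneg (convex_Ici 0)
        (d := fun s => u N lam g ω (x s) i + S)
        (fun s hs => (hsol s hs i).add (by simpa using (hasDerivAt_id s).const_mul S)) ?_
      intro s hs
      have := huS s (le_of_lt (by simpa using hs)) i
      have := neg_le_of_abs_le this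
      linarith
    have h1 := hup (Set.mem_Ici.mpr ha) (Set.mem_Ici.mpr hb) hab
    have h2 := hlo (Set.mem_Ici.mpr ha) (Set.mem_Ici.mpr hb) hab
    simp only at h1 h2
    rw [abs_le]
    constructor <;> linarith
  -- the Lyapunov function along the trajectory
  set W : ℝ → ℝ := fun t => (∑ i, G lam (x t i))
      - g / 2 * ∑ i, ∑ j, F lam (ω i j) * (F lam (x t i) * F lam (x t j)) with hWdef
  have hW : ∀ t ∈ Set.Ici (0:ℝ), HasDerivAt W (-(Phi N lam g ω (x t))) t := by
    intro t ht
    have ht' : (0:ℝ) ≤ t := ht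
    have hFi : ∀ i, HasDerivAt (fun s => F lam (x s i))
        (Fd lam (x t i) * u N lam g ω (x t) i) t := fun i => by
      simpa [Function.comp_def] using (hasDerivAt_F lam (x t i)).comp t (hsol t ht' i)
    have hGi : ∀ i, HasDerivAt (fun s => G lam (x s i))
        (x t i * Fd lam (x t i) * u N lam g ω (x t) i) t := fun i => by
      simpa [Function.comp_def, mul_assoc] using (hasDerivAt_G lam hlam (x t i)).comp t (hsol t ht' i)
    have hpart1 : HasDerivAt (fun t => ∑ i, G lam (x t i))
        (∑ i, x t i * Fd lam (x t i) * u N lam g ω (x t) i) t :=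
      HasDerivAt.fun_sum fun i _ => hGi i
    have hpart2 : HasDerivAt
        (fun t => ∑ i, ∑ j, F lam (ω i j) * (F lam (x t i) * F lam (x t j)))
        (∑ i, ∑ j, F lam (ω i j) *
          ((Fd lam (x t i) * u N lam g ω (x t) i) * F lam (x t j)
            + F lam (x t i) * (Fd lam (x t j) * u N lam g ω (x t) j))) t :=
      HasDerivAt.fun_sum fun i _ => HasDerivAt.fun_sum fun j _ => ((hFi i).mul (hFi j)).const_mul _
    have hcomb := hpart1.sub (hpart2.const_mul (g / 2))
    have hb : ∀ i, g * ∑ j, F lam (ω i j) * F lam (x t j)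
        = u N lam g ω (x t) i + x t i := by
      intro i; simp only [u]; ring
    have halg := alg_identity N g (fun i j => F lam (ω i j))
      (fun i j => by rw [hsym i j]) (fun i => x t i) (fun i => Fd lam (x t i))
      (fun i => u N lam g ω (x t) i) (fun i => F lam (x t i)) hb
    rw [hWdef]
    have : -(Phi N lam g ω (x t))
        = (∑ i, x t i * Fd lam (x t i) * u N lam g ω (x t) i)
          - g / 2 * ∑ i, ∑ j, F lam (ω i j) *
            ((Fd lam (x t i) * u N lam g ω (x t) i) * F lam (x t j)
              + F lam (x t i) * (Fd lam (x t j) * u N lam g ω (x t) j)) := by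
      rw [halg]; simp [Phi]
    rw [this]
    exact hcomb
  have hWanti : AntitoneOn W (Set.Ici 0) :=
    antitoneOn_of_hasDerivAt_nonpos (convex_Ici 0) hW
      (fun t ht => neg_nonpos.mpr (Phi_nonneg N lam g hlam ω (x t)))
  -- lower bound on W
  have hWlb : ∀ t : ℝ, -(g / 2 * N ^ 2) ≤ W t := by
    intro t
    have h1 : 0 ≤ ∑ i, G lam (x t i) :=
      Finset.sum_nonneg fun i _ => G_nonneg lam (x t i) hlam
    have h2 : |∑ i, ∑ j, F lam (ω i j) * (F lam (x t i) * F lam (x t j))| ≤ (N : ℝ) ^ 2 := by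
      calc |∑ i, ∑ j, F lam (ω i j) * (F lam (x t i) * F lam (x t j))|
          ≤ ∑ i, |∑ j, F lam (ω i j) * (F lam (x t i) * F lam (x t j))| :=
            Finset.abs_sum_le_sum_abs _ _
        _ ≤ ∑ _i : Fin N, (N : ℝ) := Finset.sum_le_sum fun i _ => by
            calc |∑ j, F lam (ω i j) * (F lam (x t i) * F lam (x t j))|
                ≤ ∑ j, |F lam (ω i j) * (F lam (x t i) * F lam (x t j))| :=
                  Finset.abs_sum_le_sum_abs _ _
              _ ≤ ∑ _j : Fin N, (1:ℝ) := Finset.sum_le_sum fun j _ => by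
                  rw [abs_mul, abs_mul]
                  have h1 := abs_F_le lam (ω i j)
                  have h2 := abs_F_le lam (x t i)
                  have h3 := abs_F_le lam (x t j)
                  have h4 : |F lam (x t i)| * |F lam (x t j)| ≤ 1 := by
                    nlinarith [abs_nonneg (F lam (x t i)), abs_nonneg (F lam (x t j))]
                  nlinarith [abs_nonneg (F lam (ω i j)),
                    mul_nonneg (abs_nonneg (F lam (x t i))) (abs_nonneg (F lam (x t j)))]
              _ = (N : ℝ) := by simp
        _ = (N : ℝ) ^ 2 := by simp [sq]
    have h3 := le_of_abs_le h2
    have : g / 2 * ∑ i, ∑ j, F lam (ω i j) * (F lam (x t i) * F lam (x t j))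
        ≤ g / 2 * N ^ 2 := mul_le_mul_of_nonneg_left h3 (by positivity)
    rw [hWdef]
    dsimp only
    linarith
  -- positivity of Phi at p
  have hPhip : 0 < Phi N lam g ω p := by
    apply Finset.sum_pos' (fun j _ => mul_nonneg (Fd_pos lam hlam (p j)).le (sq_nonneg _))
    refine ⟨i0, Finset.mem_univ i0, ?_⟩
    have h2 : 0 < (u N lam g ω p i0) ^ 2 := by
      rw [← sq_abs]; exact pow_pos (abs_pos.mpr hne) 2
    exact mul_pos (Fd_pos lam hlam (p i0)) h2
  set δ : ℝ := Phi N lam g ω p / 2 with hδdef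
  have hδ : 0 < δ := by positivity
  -- neighborhood where Phi > δ
  have hopen : IsOpen {y : Fin N → ℝ | δ < Phi N lam g ω y} :=
    isOpen_lt continuous_const (continuous_Phi N lam g ω)
  have hmem : p ∈ {y : Fin N → ℝ | δ < Phi N lam g ω y} := by
    simp only [Set.mem_setOf_eq, hδdef]; linarith
  obtain ⟨ε, hεpos, hball⟩ := Metric.isOpen_iff.mp hopen p hmem
  set η : ℝ := ε / (2 * S) with hηdef
  have hη : 0 < η := by positivity
  have hSη : S * η = ε / 2 := by
    rw [hηdef]; field_simp
  -- one step of decrease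
  have hstep : ∀ t ≥ (0:ℝ), dist (x t) p < ε / 2 → W (t + η) ≤ W t - δ * η := by
    intro t ht hdist
    have hmono : AntitoneOn (fun s => W s + δ * s) (Set.Icc t (t + η)) := by
      refine antitoneOn_of_hasDerivAt_nonpos (convex_Icc _ _)
        (d := fun s => -(Phi N lam g ω (x s)) + δ)
        (fun s hs => (hW s (Set.mem_Ici.mpr (le_trans ht hs.1))).add
          (by simpa using (hasDerivAt_id s).const_mul δ)) ?_
      intro s hs
      rw [interior_Icc] at hs
      have hst : t ≤ s := hs.1.le
      have hsη : s ≤ t + η := hs.2.le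
      have hclose : dist (x s) p < ε := by
        rw [dist_pi_lt_iff hεpos]
        intro j
        have hL := hLip j t s ht hst
        have hd2 : dist (x t j) (p j) < ε / 2 :=
          lt_of_le_of_lt (dist_le_pi_dist (x t) p j) hdist
        rw [Real.dist_eq] at hd2 ⊢
        have hSst : S * (s - t) ≤ ε / 2 := by
          calc S * (s - t) ≤ S * η := mul_le_mul_of_nonneg_left (by linarith) hSpos.le
            _ = ε / 2 := hSη
        calc |x s j - p j| ≤ |x s j - x t j| + |x t j - p j| := abs_sub_le _ _ _
          _ < ε / 2 + ε / 2 := by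
              have := le_trans hL hSst
              linarith
          _ = ε := by ring
      have := hball (Metric.mem_ball.mpr hclose)
      simp only [Set.mem_setOf_eq] at this
      linarith
    have h1 := hmono (Set.left_mem_Icc.mpr (by linarith))
      (Set.right_mem_Icc.mpr (by linarith)) (by linarith)
    simp only at h1
    linarith
  -- find times going to infinity close to p
  have key : ∀ c : ℝ, ∃ n, c ≤ tn n ∧ dist (x (tn n)) p < ε / 2 := by
    obtain ⟨N₀, hN₀⟩ := Metric.tendsto_atTop.mp hconv (ε / 2) (by positivity)
    intro c
    obtain ⟨m, hm⟩ := ((htninf.eventually_ge_atTop c).and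
      (eventually_atTop.mpr ⟨N₀, fun n hn => hN₀ n hn⟩)).exists
    exact ⟨m, hm.1, hm.2⟩
  choose f hf1 hf2 using key
  set C : ℝ := W (tn (f 0)) with hCdef
  have hind : ∀ k : ℕ, ∃ t : ℝ, 0 ≤ t ∧ dist (x t) p < ε / 2 ∧ W t ≤ C - k * (δ * η) := by
    intro k
    induction k with
    | zero =>
      exact ⟨tn (f 0), htn0 _, hf2 0, by simp [hCdef]⟩
    | succ k ih =>
      obtain ⟨t, ht0, htd, htW⟩ := ih
      refine ⟨tn (f (t + η)), htn0 _, hf2 (t + η), ?_⟩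
      have h1 : t + η ≤ tn (f (t + η)) := hf1 (t + η)
      have h2 : W (tn (f (t + η))) ≤ W (t + η) :=
        hWanti (Set.mem_Ici.mpr (by linarith)) (Set.mem_Ici.mpr (by linarith)) h1
      have h3 := hstep t ht0 htd
      push_cast
      linarith
  obtain ⟨k, hk⟩ := exists_nat_gt ((C + g / 2 * N ^ 2) / (δ * η))
  obtain ⟨t, ht0, _, htW⟩ := hind k
  have hlb := hWlb t
  have hδη : 0 < δ * η := by positivity
  rw [div_lt_iff₀ hδη] at hk
  clear_value C δ η W S B K
  linarith [htW, hlb, hk]
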